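/- arXiv:2207.13547 — 3 statements merged into one kernel-verified Lean document; each statement's English description precedes it below -/
import Mathlib

section
/- (Reappearance of critical Floquet multipliers.) Let d ∈ ℕ and let f : ℂ^d × ℂ^d → ℂ^d be continuously differentiable. Let ũ : ℝ → ℂ^d be a T-periodic (T > 0) differentiable solution of ũ'(t) = f(ũ(t), ũ(t − τ̃)) for some τ̃ ∈ ℝ, and let w : ℝ → ℂ^d be a differentiable function satisfying the variational equation w'(t) = A(t)w(t) + B(t)w(t − τ̃) for all t, where A(t) = ∂ₓf(ũ(t), ũ(t − τ̃)) and B(t) = ∂_y f(ũ(t), ũ(t − τ̃)), together with the Floquet relation w(t + T) = μ w(t) for all t, for some μ ∈ ℂ with μ^j = 1 for some integer j ≥ 2. Then for every integer k, setting τ_k = τ̃ + jkT: (i) ũ'(t) = f(ũ(t), ũ(t − τ_k)) for all t, and (ii) w satisfies w'(t) = A_k(t)w(t) + B_k(t)w(t − τ_k) for all t, where A_k(t) = ∂ₓf(ũ(t), ũ(t − τ_k)) and B_k(t) = ∂_y f(ũ(t), ũ(t − τ_k)), together with w(t + T) = μ w(t). In other words, ũ is a T-periodic solution of the DDE with delay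 τ_k possessing the Floquet eigenfunction w with multiplier μ. -/
/-- **Reappearance of critical Floquet multipliers.**
Let `f` be `C¹`, let `u` be a `T`-periodic solution of the DDE
`u'(t) = f(u(t), u(t - τ̃))` and let `w` be a Floquet eigenfunction of the
variational equation along `u` with multiplier `μ` satisfying `μ ^ j = 1`
for some `j ≥ 2`.  Then for every integer `k`, setting `τ_k = τ̃ + j*k*T`,
the function `u` is a `T`-periodic solution of the DDE with delay `τ_k`
and `w` is a Floquet eigenfunction with multiplier `μ` of the variational
equation along `u` for the delay `τ_k`. -/
theorem reappearance_of_critical_Floquet_multipliers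
    (d : ℕ) (f : (Fin d → ℂ) × (Fin d → ℂ) → Fin d → ℂ)
    (hf : ContDiff ℝ 1 f)
    (τ T : ℝ) (hT : 0 < T) (u w : ℝ → Fin d → ℂ) (μ : ℂ)
    (j : ℕ) (hj : 2 ≤ j) (hμ : μ ^ j = 1)
    (hu : ∀ t : ℝ, HasDerivAt u (f (u t, u (t - τ))) t)
    (hper : ∀ t : ℝ, u (t + T) = u t)
    (hw : ∀ t : ℝ, HasDerivAt w
      (fderiv ℝ (fun x => f (x, u (t - τ))) (u t) (w t)
        + fderiv ℝ (fun y => f (u t, y)) (u (t - τ)) (w (t - τ))) t)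
    (hwT : ∀ t : ℝ, w (t + T) = μ • w t) :
    ∀ k : ℤ,
      (∀ t : ℝ, HasDerivAt u (f (u t, u (t - (τ + (j : ℝ) * (k : ℝ) * T)))) t) ∧
      (∀ t : ℝ, u (t + T) = u t) ∧
      (∀ t : ℝ, HasDerivAt w
        (fderiv ℝ (fun x => f (x, u (t - (τ + (j : ℝ) * (k : ℝ) * T)))) (u t) (w t)
          + fderiv ℝ (fun y => f (u t, y)) (u (t - (τ + (j : ℝ) * (k : ℝ) * T)))
              (w (t - (τ + (j : ℝ) * (k : ℝ) * T)))) t) ∧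
      (∀ t : ℝ, w (t + T) = μ • w t) := by
  have hμ0 : μ ≠ 0 := by
    intro h
    rw [h, zero_pow (by omega : j ≠ 0)] at hμ
    exact one_ne_zero hμ.symm
  -- integer periodicity of u
  have hu_int : ∀ (n : ℤ) (t : ℝ), u (t + n * T) = u t := by
    intro n
    induction n using Int.induction_on with
    | zero => intro t; simp
    | succ n ih =>
        intro t
        have h1 : t + (((n : ℤ) + 1 : ℤ) : ℝ) * T = (t + ((n : ℤ) : ℝ) * T) + T := by
          push_cast; ring
        rw [h1, hper, ih]
    | pred n ih =>
        intro t
        have h1 : (t + ((-(n : ℤ) - 1 : ℤ) : ℝ) * T) + T = t + ((-(n : ℤ) : ℤ) : ℝ) * T := by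
          push_cast; ring
        have h2 := hper (t + ((-(n : ℤ) - 1 : ℤ) : ℝ) * T)
        rw [h1, ih] at h2
        exact h2.symm
  -- Floquet relation for integer multiples
  have hw_int : ∀ (n : ℤ) (t : ℝ), w (t + n * T) = μ ^ n • w t := by
    intro n
    induction n using Int.induction_on with
    | zero => intro t; simp
    | succ n ih =>
        intro t
        have h1 : t + (((n : ℤ) + 1 : ℤ) : ℝ) * T = (t + ((n : ℤ) : ℝ) * T) + T := by
          push_cast; ring
        rw [h1, hwT, ih, smul_smul, ← zpow_one_add₀ hμ0]
        ring_nf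
    | pred n ih =>
        intro t
        have h1 : (t + ((-(n : ℤ) - 1 : ℤ) : ℝ) * T) + T = t + ((-(n : ℤ) : ℤ) : ℝ) * T := by
          push_cast; ring
        have h2 := hwT (t + ((-(n : ℤ) - 1 : ℤ) : ℝ) * T)
        rw [h1, ih] at h2
        have h3 : w (t + ((-(n : ℤ) - 1 : ℤ) : ℝ) * T) = μ⁻¹ • (μ ^ (-(n : ℤ)) • w t) := by
          rw [h2, smul_smul, inv_mul_cancel₀ hμ0, one_smul]
        rw [h3, smul_smul, ← zpow_neg_one, ← zpow_add₀ hμ0]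
        ring_nf
  intro k
  have hμjk : μ ^ (-((j : ℤ) * k)) = 1 := by
    rw [zpow_neg, zpow_mul, zpow_natCast, hμ, one_zpow, inv_one]
  have hshift : ∀ t : ℝ, t - (τ + (j : ℝ) * (k : ℝ) * T) = (t - τ) + (-((j : ℤ) * k) : ℤ) * T := by
    intro t; push_cast; ring
  have huτ : ∀ t : ℝ, u (t - (τ + (j : ℝ) * (k : ℝ) * T)) = u (t - τ) := by
    intro t; rw [hshift, hu_int]
  have hwτ : ∀ t : ℝ, w (t - (τ + (j : ℝ) * (k : ℝ) * T)) = w (t - τ) := by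
    intro t; rw [hshift, hw_int, hμjk, one_smul]
  refine ⟨fun t => by rw [huτ]; exact hu t, hper, fun t => ?_, hwT⟩
  rw [huτ, hwτ]
  exact hw t
end

section
/- (Reappearance of period-doubling bifurcations.) Let d ∈ ℕ and let f : ℂ^d × ℂ^d → ℂ^d be continuously differentiable. Let ũ : ℝ → ℂ^d be a T-periodic (T > 0) differentiable solution of ũ'(t) = f(ũ(t), ũ(t − τ̃)) for some τ̃ ∈ ℝ, and let w : ℝ → ℂ^d be a differentiable function satisfying w'(t) = ∂ₓf(ũ(t), ũ(t − τ̃))·w(t) + ∂_y f(ũ(t), ũ(t − τ̃))·w(t − τ̃) for all t, together with the anti-periodicity relation w(t + T) = −w(t) for all t. Then for every integer k, with τ_k = τ̃ + 2kT, the function ũ is a T-periodic solution of ũ'(t) = f(ũ(t), ũ(t − τ_k)) for all t, and w satisfies w'(t) = ∂ₓf(ũ(t), ũ(t − τ_k))·w(t) + ∂_y f(ũ(t), ũ(t − τ_k))·w(t − τ_k) for all t with w(t + T) = −w(t); that is, the Floquet multiplier −1 reappears at all delays τ̃ + 2kT, k ∈ ℤ. -/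
/-- **Reappearance of period-doubling bifurcations.**
Let `f` be `C¹`, let `u` be a `T`-periodic solution of the DDE
`u'(t) = f(u(t), u(t - τ̃))` and let `w` be a Floquet eigenfunction of the
variational equation along `u` with the anti-periodicity `w(t + T) = -w(t)`
(multiplier `-1`).  Then for every integer `k`, with `τ_k = τ̃ + 2*k*T`,
the function `u` is a `T`-periodic solution of the DDE with delay `τ_k` and
`w` satisfies the corresponding variational equation with delay `τ_k`
together with `w(t + T) = -w(t)`: the Floquet multiplier `-1` reappears at
all delays `τ̃ + 2kT`. -/
theorem reappearance_of_period_doubling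
    (d : ℕ) (f : (Fin d → ℂ) × (Fin d → ℂ) → Fin d → ℂ)
    (hf : ContDiff ℝ 1 f)
    (τ T : ℝ) (hT : 0 < T) (u w : ℝ → Fin d → ℂ)
    (hu : ∀ t : ℝ, HasDerivAt u (f (u t, u (t - τ))) t)
    (hper : ∀ t : ℝ, u (t + T) = u t)
    (hw : ∀ t : ℝ, HasDerivAt w
      (fderiv ℝ (fun x => f (x, u (t - τ))) (u t) (w t)
        + fderiv ℝ (fun y => f (u t, y)) (u (t - τ)) (w (t - τ))) t)
    (hwT : ∀ t : ℝ, w (t + T) = -w t) :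
    ∀ k : ℤ,
      (∀ t : ℝ, HasDerivAt u (f (u t, u (t - (τ + 2 * (k : ℝ) * T)))) t) ∧
      (∀ t : ℝ, u (t + T) = u t) ∧
      (∀ t : ℝ, HasDerivAt w
        (fderiv ℝ (fun x => f (x, u (t - (τ + 2 * (k : ℝ) * T)))) (u t) (w t)
          + fderiv ℝ (fun y => f (u t, y)) (u (t - (τ + 2 * (k : ℝ) * T)))
              (w (t - (τ + 2 * (k : ℝ) * T)))) t) ∧
      (∀ t : ℝ, w (t + T) = -w t) := by
  have hup : Function.Periodic u T := hper
  have hwa : Function.Antiperiodic w T := hwT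
  have hwp : Function.Periodic w (2 * T) := by
    simpa [two_mul] using hwa.periodic
  intro k
  have hushift : ∀ t : ℝ, u (t - (τ + 2 * (k : ℝ) * T)) = u (t - τ) := by
    intro t
    have h := (hup.int_mul (2 * k)).sub_eq (t - τ)
    have : t - τ - (2 * k : ℤ) * T = t - (τ + 2 * (k : ℝ) * T) := by
      push_cast; ring
    rw [this] at h
    exact h
  have hwshift : ∀ t : ℝ, w (t - (τ + 2 * (k : ℝ) * T)) = w (t - τ) := by
    intro t
    have h := (hwp.int_mul k).sub_eq (t - τ)
    have : t - τ - (k : ℤ) * (2 * T) = t - (τ + 2 * (k : ℝ) * T) := by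
      push_cast; ring
    rw [this] at h
    exact h
  refine ⟨fun t => ?_, hper, fun t => ?_, hwT⟩
  · rw [hushift]; exact hu t
  · rw [hushift, hwshift]; exact hw t
end

section
/- (Invariance of the cartesian leaf.) Let a, b ∈ ℝ and let x, y : ℝ → ℝ be differentiable functions satisfying x'(t) = a x(t) + b y(t) − a x(t)² and y'(t) = b x(t) + a y(t) − (3/2) b x(t)² − (3/2) a x(t) y(t) for all t ∈ ℝ. If x(t₀)²(1 − x(t₀)) − y(t₀)² = 0 for some t₀ ∈ ℝ, then x(t)²(1 − x(t)) − y(t)² = 0 for all t ∈ ℝ; that is, the cartesian leaf x²(1 − x) = y² is invariant under the planar flow of Sandstede's model with (μ, μ̃) = (0, 0) restricted to z = 0. -/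
/-- **Invariance of the cartesian leaf.**
If `x' = ax + by - ax²` and `y' = bx + ay - (3/2)bx² - (3/2)axy`, and
`x(t₀)²(1 - x(t₀)) - y(t₀)² = 0` at some time `t₀`, then
`x(t)²(1 - x(t)) - y(t)² = 0` for all `t`: the cartesian leaf
`x²(1 - x) = y²` is invariant under the planar Sandstede flow. -/
theorem cartesian_leaf_invariant
    (a b : ℝ) (x y : ℝ → ℝ)
    (hx : ∀ t : ℝ, HasDerivAt x (a * x t + b * y t - a * (x t) ^ 2) t)
    (hy : ∀ t : ℝ, HasDerivAt y
      (b * x t + a * y t - (3 / 2) * b * (x t) ^ 2 - (3 / 2) * a * x t * y t) t)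
    (t₀ : ℝ) (h0 : (x t₀) ^ 2 * (1 - x t₀) - (y t₀) ^ 2 = 0) :
    ∀ t : ℝ, (x t) ^ 2 * (1 - x t) - (y t) ^ 2 = 0 := by
  set V : ℝ → ℝ := fun t => (x t) ^ 2 * (1 - x t) - (y t) ^ 2 with hVdef
  set g : ℝ → ℝ := fun t => a * (2 - 3 * x t) with hgdef
  have hxc : Continuous x := by
    exact continuous_iff_continuousAt.mpr fun t => (hx t).continuousAt
  have hgc : Continuous g := by continuity
  have hV : ∀ t : ℝ, HasDerivAt V (g t * V t) t := by
    intro t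
    have h :=
      (((hx t).pow 2).mul ((hasDerivAt_const t (1 : ℝ)).sub (hx t))).sub ((hy t).pow 2)
    refine (h : HasDerivAt V _ t).congr_deriv ?_
    simp [hVdef, hgdef]
    ring
  set G : ℝ → ℝ := fun t => ∫ s in t₀..t, g s with hGdef
  have hG : ∀ t : ℝ, HasDerivAt G (g t) t := by
    intro t
    exact intervalIntegral.integral_hasDerivAt_right
      (hgc.intervalIntegrable _ _) (hgc.stronglyMeasurableAtFilter _ _)
      hgc.continuousAt
  set W : ℝ → ℝ := fun t => V t * Real.exp (-G t) with hWdef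
  have hW : ∀ t : ℝ, HasDerivAt W 0 t := by
    intro t
    have h := (hV t).mul (((hG t).neg).exp)
    refine (h : HasDerivAt W _ t).congr_deriv ?_
    ring
  have hWconst : ∀ t : ℝ, W t = W t₀ := by
    intro t
    have hdiff : Differentiable ℝ W := fun s => (hW s).differentiableAt
    have hderiv : ∀ s, deriv W s = 0 := fun s => (hW s).deriv
    exact is_const_of_deriv_eq_zero hdiff hderiv t t₀
  intro t
  have hWt : W t = 0 := by
    rw [hWconst t]
    simp [hWdef, hVdef]
    exact h0
  have := mul_eq_zero.mp hWt
  rcases this with h | h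
  · exact h
  · exact absurd h (Real.exp_ne_zero _)
end
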